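/- Let S be a closed subspace of ℓ∞ containing c₀ such that the quotient Banach space ℓ∞/S is separable. Then S is an ℓ∞-Grothendieck subspace. -/

import Mathlib

open Filter Topology MeasureTheory
open scoped ENNReal

noncomputable section

/-- A Banach space `X` has weak*-sequentially compact dual ball if every sequence in the
closed unit ball of `X*` has a weak*-convergent subsequence. -/
def WStarSeqCompactDualBall (X : Type*) [SeminormedAddCommGroup X] [NormedSpace ℝ X] : Prop :=
  ∀ f : ℕ → (X →L[ℝ] ℝ), (∀ n, ‖f n‖ ≤ 1) →
    ∃ φ : ℕ → ℕ, StrictMono φ ∧ ∃ g : X →L[ℝ] ℝ,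
      ∀ x : X, Tendsto (fun k => f (φ k) x) atTop (nhds (g x))

/-- A Banach space `X` is a Grothendieck space if every weak*-convergent sequence in `X*`
is weakly convergent. -/
def GrothendieckSpace (X : Type*) [SeminormedAddCommGroup X] [NormedSpace ℝ X] : Prop :=
  ∀ (f : ℕ → (X →L[ℝ] ℝ)) (g : X →L[ℝ] ℝ),
    (∀ x : X, Tendsto (fun n => f n x) atTop (nhds (g x))) →
    ∀ F : (X →L[ℝ] ℝ) →L[ℝ] ℝ, Tendsto (fun n => F (f n)) atTop (nhds (F g))

/-- An operator is weakly compact if the closure of the image of the closed unit ball is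
compact in the weak topology of the codomain. -/
def IsWeaklyCompactOp {X Y : Type*} [SeminormedAddCommGroup X] [NormedSpace ℝ X]
    [SeminormedAddCommGroup Y] [NormedSpace ℝ Y] (T : X →L[ℝ] Y) : Prop :=
  IsCompact (closure (toWeakSpace ℝ Y '' (T '' Metric.closedBall (0:X) 1)))

/-- `ℓ¹`, the space of absolutely summable real sequences. -/
abbrev ellOne : Type := ↥(lp (fun _ : ℕ => ℝ) 1)

/-- Two normed spaces are isomorphic if there is a continuous linear bijection between them
with continuous inverse. -/
def IsomorphicBanach (X Y : Type*) [SeminormedAddCommGroup X] [NormedSpace ℝ X]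
    [SeminormedAddCommGroup Y] [NormedSpace ℝ Y] : Prop :=
  Nonempty (X ≃L[ℝ] Y)

/-- `ℓ∞`, the space of bounded real sequences with the sup norm. -/
abbrev ellInfty : Type := ↥(lp (fun _ : ℕ => ℝ) ∞)

/-- `c₀`, the subspace of `ℓ∞` of sequences converging to `0`. -/
def cZero : Submodule ℝ ellInfty where
  carrier := {x | Tendsto (fun i => (x : ℕ → ℝ) i) atTop (nhds 0)}
  zero_mem' := by
    simpa [lp.coeFn_zero] using (tendsto_const_nhds : Tendsto (fun _ : ℕ => (0:ℝ)) atTop (nhds 0))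
  add_mem' := by
    intro x y hx hy
    have := hx.add hy
    simpa [lp.coeFn_add] using this
  smul_mem' := by
    intro c x hx
    have := hx.const_mul c
    simpa [lp.coeFn_smul, smul_eq_mul] using this

/-- The `i`-th standard unit vector in `ℓ∞`. -/
def eVec (i : ℕ) : ellInfty := lp.single ∞ i 1

lemma eVec_mem_cZero (i : ℕ) : eVec i ∈ cZero := by
  have h : (fun n => (eVec i : ℕ → ℝ) n) =ᶠ[atTop] fun _ => (0:ℝ) := by
    filter_upwards [eventually_gt_atTop i] with n hn
    simp [eVec, lp.single_apply, hn.ne']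
  exact Tendsto.congr' h.symm tendsto_const_nhds

/-- The `i`-th standard unit vector, as an element of a subspace `S` of `ℓ∞` containing `c₀`. -/
def eIn (S : Submodule ℝ ellInfty) (hS : cZero ≤ S) (i : ℕ) : ↥S :=
  ⟨eVec i, hS (eVec_mem_cZero i)⟩

/-- A sequence `(fₙ)` in `S*` is `σ(S*,ℓ∞)`-convergent to `g` if, testing against the unit
vectors `eᵢ`, it converges against every bounded real sequence `z`. -/
def SigmaLinfConv (S : Submodule ℝ ellInfty) (hS : cZero ≤ S)
    (f : ℕ → (↥S →L[ℝ] ℝ)) (g : ↥S →L[ℝ] ℝ) : Prop :=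
  ∀ z : ℕ → ℝ, (∃ C : ℝ, ∀ i, |z i| ≤ C) →
    Tendsto (fun n => ∑' i, z i * f n (eIn S hS i)) atTop
      (nhds (∑' i, z i * g (eIn S hS i)))

/-- `S` is an `ℓ∞`-Grothendieck subspace if it contains `c₀` and every weak*-convergent
sequence in `S*` is `σ(S*,ℓ∞)`-convergent. -/
def IsLinfGrothendieck (S : Submodule ℝ ellInfty) : Prop :=
  ∃ hS : cZero ≤ S, ∀ (f : ℕ → (↥S →L[ℝ] ℝ)) (g : ↥S →L[ℝ] ℝ),
    (∀ x : ↥S, Tendsto (fun n => f n x) atTop (nhds (g x))) →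
    SigmaLinfConv S hS f g

set_option maxHeartbeats 1000000
set_option synthInstance.maxHeartbeats 400000
namespace Stmt7

/-- Build an element of `ℓ∞` from a bounded sequence. -/
def ofSeq (x : ℕ → ℝ) (C : ℝ) (h : ∀ i, |x i| ≤ C) : ellInfty :=
  ⟨x, memℓp_infty ⟨C, by rintro r ⟨i, rfl⟩; simpa [Real.norm_eq_abs] using h i⟩⟩

@[simp] lemma ofSeq_coe (x : ℕ → ℝ) (C : ℝ) (h : ∀ i, |x i| ≤ C) :
    ((ofSeq x C h : ellInfty) : ℕ → ℝ) = x := rfl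

lemma ofSeq_norm_le (x : ℕ → ℝ) (C : ℝ) (hC : 0 ≤ C) (h : ∀ i, |x i| ≤ C) :
    ‖ofSeq x C h‖ ≤ C :=
  lp.norm_le_of_forall_le hC (fun i => by simpa [Real.norm_eq_abs] using h i)

@[simp] lemma eVec_coe (i j : ℕ) : (eVec i : ℕ → ℝ) j = if j = i then 1 else 0 := by
  rw [eVec, lp.single_apply]
  split <;> simp_all

lemma coe_sum_smul_eVec (F : Finset ℕ) (c : ℕ → ℝ) (j : ℕ) :
    ((((∑ i ∈ F, c i • eVec i) : ellInfty)) : ℕ → ℝ) j = if j ∈ F then c j else 0 := by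
  rw [lp.coeFn_sum, Finset.sum_apply]
  simp only [lp.coeFn_smul, Pi.smul_apply, eVec_coe, smul_eq_mul, mul_ite, mul_one, mul_zero]
  rw [Finset.sum_ite_eq F j c]

end Stmt7
namespace Stmt7

lemma sum_abs_eval_le (S : Submodule ℝ ellInfty) (hS : cZero ≤ S)
    (h : ↥S →L[ℝ] ℝ) (F : Finset ℕ) :
    ∑ i ∈ F, |h (eIn S hS i)| ≤ ‖h‖ := by
  classical
  set c : ℕ → ℝ := fun i => if h (eIn S hS i) < 0 then -1 else 1 with hc
  set v : ↥S := ∑ i ∈ F, c i • eIn S hS i with hv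
  have hval : h v = ∑ i ∈ F, |h (eIn S hS i)| := by
    rw [hv, map_sum]
    refine Finset.sum_congr rfl fun i _ => ?_
    rw [_root_.map_smul, smul_eq_mul, hc]
    by_cases hneg : h (eIn S hS i) < 0
    · simp [hneg, abs_of_neg hneg]
    · simp [hneg, abs_of_nonneg (not_lt.1 hneg)]
  have hcoe : ((v : ellInfty) : ℕ → ℝ) = fun j => if j ∈ F then c j else 0 := by
    funext j
    have : (v : ellInfty) = ∑ i ∈ F, c i • eVec i := by
      rw [hv, Submodule.coe_sum]
      refine Finset.sum_congr rfl fun i _ => rfl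
    rw [this, coe_sum_smul_eVec]
  have hnorm : ‖v‖ ≤ 1 := by
    have : ‖(v : ellInfty)‖ ≤ 1 := by
      refine lp.norm_le_of_forall_le zero_le_one fun j => ?_
      have := congrFun hcoe j
      rw [Real.norm_eq_abs, this]
      by_cases hj : j ∈ F
      · simp only [hj, if_true, hc]
        split <;> norm_num
      · simp [hj]
    simpa using this
  have hb : ‖h v‖ ≤ ‖h‖ := h.unit_le_opNorm v hnorm
  rw [Real.norm_eq_abs] at hb
  calc ∑ i ∈ F, |h (eIn S hS i)| = h v := hval.symm
    _ ≤ |h v| := le_abs_self _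
    _ ≤ ‖h‖ := hb

lemma summable_abs_eval (S : Submodule ℝ ellInfty) (hS : cZero ≤ S)
    (h : ↥S →L[ℝ] ℝ) : Summable fun i => |h (eIn S hS i)| :=
  summable_of_sum_le (fun i => abs_nonneg _) (sum_abs_eval_le S hS h)

lemma summable_mul_eval (S : Submodule ℝ ellInfty) (hS : cZero ≤ S)
    (h : ↥S →L[ℝ] ℝ) (z : ℕ → ℝ) (C : ℝ) (hC : ∀ i, |z i| ≤ C) :
    Summable fun i => z i * h (eIn S hS i) := by
  have h0 : 0 ≤ C := le_trans (abs_nonneg _) (hC 0)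
  refine (Summable.mul_left C (summable_abs_eval S hS h)).of_norm_bounded fun i => ?_
  rw [Real.norm_eq_abs, abs_mul]
  exact mul_le_mul_of_nonneg_right (hC i) (abs_nonneg _)

end Stmt7
namespace Stmt7

lemma hump_extract (a : ℕ → ℕ → ℝ) (hsum : ∀ k, Summable fun i => |a k i|)
    (hnull : ∀ i, Tendsto (fun k => a k i) atTop (nhds 0)) (δ : ℝ) (hδ : 0 < δ) :
    ∃ ν m : ℕ → ℕ, StrictMono ν ∧ StrictMono m ∧ m 0 = 0 ∧ ∀ k,
      (∑ i ∈ Finset.range (m k), |a (ν k) i|) < δ ∧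
      (∑' i, |a (ν k) (i + m (k+1))|) < δ := by
  have step : ∀ N m' : ℕ, ∃ p : ℕ × ℕ, N < p.1 ∧ m' < p.2 ∧
      (∑ i ∈ Finset.range m', |a p.1 i|) < δ ∧ (∑' i, |a p.1 (i + p.2)|) < δ := by
    intro N m'
    have h1 : Tendsto (fun k => ∑ i ∈ Finset.range m', |a k i|) atTop (nhds 0) := by
      have : Tendsto (fun k => ∑ i ∈ Finset.range m', |a k i|) atTop
          (nhds (∑ i ∈ Finset.range m', (0:ℝ))) := by
        refine tendsto_finset_sum _ fun i _ => ?_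
        simpa using (hnull i).abs
      simpa using this
    obtain ⟨k, hk1, hk2⟩ := ((h1.eventually (gt_mem_nhds hδ)).and (eventually_gt_atTop N)).exists
    have h2 : Tendsto (fun mm => ∑' i, |a k (i + mm)|) atTop (nhds 0) :=
      tendsto_sum_nat_add (fun i => |a k i|)
    obtain ⟨mm, hm1, hm2⟩ :=
      ((h2.eventually (gt_mem_nhds hδ)).and (eventually_gt_atTop m')).exists
    exact ⟨(k, mm), hk2, hm2, hk1, hm1⟩
  choose F h1 h2 h3 h4 using fun p : ℕ × ℕ => step p.1 p.2
  let g : ℕ → ℕ × ℕ := fun k => Nat.rec (F (0, 0)) (fun _ p => F p) k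
  have hg0 : g 0 = F (0, 0) := rfl
  have hgs : ∀ k, g (k+1) = F (g k) := fun k => rfl
  refine ⟨fun k => (g k).1, fun k => if k = 0 then 0 else (g (k-1)).2, ?_, ?_, ?_, ?_⟩
  · apply strictMono_nat_of_lt_succ
    intro k; rw [hgs k]; exact h1 (g k)
  · apply strictMono_nat_of_lt_succ
    intro k
    cases k with
    | zero => simpa [hg0] using h2 (0, 0)
    | succ n => simp [hgs]; exact h2 (g n)
  · simp
  · intro k
    cases k with
    | zero =>
      constructor
      · simpa using hδ
      · simpa [hg0] using h4 (0, 0)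
    | succ n =>
      constructor
      · simpa [Nat.succ_sub_one] using h3 (g n)
      · simpa [Nat.succ_sub_one] using h4 (g n)

end Stmt7
namespace Stmt7

lemma hump_lower (a : ℕ → ℝ) (hsum : Summable fun i => |a i|) (z : ℕ → ℝ) (C : ℝ)
    (hC : ∀ i, |z i| ≤ C) (ε δ : ℝ) (hbig : ε ≤ |∑' i, z i * a i|)
    (m1 m2 : ℕ) (hm : m1 ≤ m2)
    (hinit : ∑ i ∈ Finset.range m1, |a i| < δ)
    (htail : ∑' i, |a (i + m2)| < δ) :
    ε - 2*(C*δ) ≤ |∑ i ∈ Finset.Ico m1 m2, z i * a i| := by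
  have hC0 : 0 ≤ C := le_trans (abs_nonneg _) (hC 0)
  have hz : Summable fun i => z i * a i := by
    refine (hsum.mul_left C).of_norm_bounded fun i => ?_
    rw [Real.norm_eq_abs, abs_mul]
    exact mul_le_mul_of_nonneg_right (hC i) (abs_nonneg _)
  have hsplit := hz.sum_add_tsum_nat_add m2
  have hrange : ∑ i ∈ Finset.range m2, z i * a i
      = ∑ i ∈ Finset.range m1, z i * a i + ∑ i ∈ Finset.Ico m1 m2, z i * a i := by
    rw [Finset.range_eq_Ico,
      ← Finset.sum_Ico_consecutive _ (Nat.zero_le m1) hm, ← Finset.range_eq_Ico]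
  have hP1 : |∑ i ∈ Finset.range m1, z i * a i| ≤ C * δ := by
    calc |∑ i ∈ Finset.range m1, z i * a i| ≤ ∑ i ∈ Finset.range m1, |z i * a i| :=
          Finset.abs_sum_le_sum_abs _ _
      _ ≤ ∑ i ∈ Finset.range m1, C * |a i| := by
          refine Finset.sum_le_sum fun i _ => ?_
          rw [abs_mul]; exact mul_le_mul_of_nonneg_right (hC i) (abs_nonneg _)
      _ = C * ∑ i ∈ Finset.range m1, |a i| := by rw [Finset.mul_sum]
      _ ≤ C * δ := mul_le_mul_of_nonneg_left hinit.le hC0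
  have hsum2 : Summable fun i => |a (i + m2)| := (summable_nat_add_iff m2).2 hsum
  have hz2 : Summable fun i => z (i + m2) * a (i + m2) := (summable_nat_add_iff m2).2 hz
  have hP3 : |∑' i, z (i + m2) * a (i + m2)| ≤ C * δ := by
    calc |∑' i, z (i + m2) * a (i + m2)| ≤ ∑' i, |z (i + m2) * a (i + m2)| := by
          have := norm_tsum_le_tsum_norm (f := fun i => z (i + m2) * a (i + m2)) (by
            simp only [Real.norm_eq_abs]; exact hz2.abs)
          simp only [Real.norm_eq_abs] at this; exact this
      _ ≤ ∑' i, C * |a (i + m2)| := by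
          refine Summable.tsum_le_tsum (fun i => ?_) hz2.abs (hsum2.mul_left C)
          rw [abs_mul]; exact mul_le_mul_of_nonneg_right (hC _) (abs_nonneg _)
      _ = C * ∑' i, |a (i + m2)| := by rw [tsum_mul_left]
      _ ≤ C * δ := mul_le_mul_of_nonneg_left htail.le hC0
  have : |∑' i, z i * a i| ≤ |∑ i ∈ Finset.Ico m1 m2, z i * a i| + (C * δ + C * δ) := by
    rw [← hsplit, hrange]
    calc |∑ i ∈ Finset.range m1, z i * a i + ∑ i ∈ Finset.Ico m1 m2, z i * a i
        + ∑' i, z (i + m2) * a (i + m2)|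
        ≤ |∑ i ∈ Finset.range m1, z i * a i| + |∑ i ∈ Finset.Ico m1 m2, z i * a i|
          + |∑' i, z (i + m2) * a (i + m2)| := abs_add_three _ _ _
      _ ≤ C * δ + |∑ i ∈ Finset.Ico m1 m2, z i * a i| + C * δ := by
          gcongr
      _ = |∑ i ∈ Finset.Ico m1 m2, z i * a i| + (C * δ + C * δ) := by ring
  linarith [le_trans hbig this]

end Stmt7
namespace Stmt7

lemma rosenthal (μ : ℕ → Set ℕ → ℝ) (M ε : ℝ) (hε : 0 < ε)
    (mono : ∀ k, Monotone (μ k)) (nonneg : ∀ k A, 0 ≤ μ k A)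
    (super : ∀ k A B, Disjoint A B → μ k A + μ k B ≤ μ k (A ∪ B))
    (bdd : ∀ k A, μ k A ≤ M) (I : Set ℕ) (hI : I.Infinite) :
    ∃ J : Set ℕ, J ⊆ I ∧ J.Infinite ∧ ∀ k ∈ J, μ k (J \ {k}) ≤ ε := by
  classical
  by_contra hcon
  push_neg at hcon
  have h : ∀ N : Set ℕ, N ⊆ I → N.Infinite → ∃ k ∈ N, ε < μ k (N \ {k}) := by
    intro N hNI hNinf
    obtain ⟨k, hk1, hk2⟩ := hcon N hNI hNinf
    exact ⟨k, hk1, hk2⟩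
  -- finite superadditivity
  have finsuper : ∀ k (W : ℕ → Set ℕ) (K : ℕ),
      (∀ r r', r < r' → r' < K → Disjoint (W r) (W r')) →
      ∑ r ∈ Finset.range K, μ k (W r) ≤ μ k (⋃ r ∈ Finset.range K, W r) := by
    intro k W K
    induction K with
    | zero =>
      intro _
      simp only [Finset.range_zero, Finset.sum_empty]
      exact nonneg k _
    | succ K ih =>
      intro hdisj
      have hdisjK : Disjoint (⋃ r ∈ Finset.range K, W r) (W K) := by
        refine Set.disjoint_left.2 fun x hx hxK => ?_
        simp only [Set.mem_iUnion, Finset.mem_range] at hx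
        obtain ⟨r, hr, hxr⟩ := hx
        exact Set.disjoint_left.1 (hdisj r K hr (Nat.lt_succ_self K)) hxr hxK
      have hU : (⋃ r ∈ Finset.range (K+1), W r)
          = (⋃ r ∈ Finset.range K, W r) ∪ W K := by
        rw [Finset.range_add_one]
        rw [Finset.set_biUnion_insert]
        rw [Set.union_comm]
      rw [Finset.sum_range_succ, hU]
      have := super k (⋃ r ∈ Finset.range K, W r) (W K) hdisjK
      have hih := ih (fun r r' h1 h2 => hdisj r r' h1 (Nat.lt_succ_of_lt h2))
      linarith
  -- the stage construction
  have stage : ∀ N : Set ℕ, N ⊆ I → N.Infinite →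
      ∃ N' : Set ℕ, N' ⊆ N ∧ N'.Infinite ∧ ∃ w : ℕ → Set ℕ,
        ∀ m ∈ N', w m ⊆ N \ {m} ∧ ε < μ m (w m) ∧ Disjoint (N' \ {m}) (w m) := by
    intro N hNI hNinf
    set e := hNinf.natEmbedding with he
    set f : ℕ → ℕ → ℕ := fun j i => (e (Nat.pair j i) : ℕ) with hf
    have hfinj : ∀ j i j' i', f j i = f j' i' → j = j' ∧ i = i' := by
      intro j i j' i' hEq
      have := e.injective (Subtype.ext hEq)
      have h1 := congrArg Nat.unpair this
      simp [Nat.unpair_pair] at h1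
      exact ⟨h1.1, h1.2⟩
    set P : ℕ → Set ℕ := fun j => Set.range (f j) with hP
    have hPN : ∀ j, P j ⊆ N := by
      rintro j x ⟨i, rfl⟩; exact (e (Nat.pair j i)).2
    have hPinf : ∀ j, (P j).Infinite := by
      intro j
      refine Set.infinite_range_of_injective fun i i' hEq => (hfinj j i j i' hEq).2
    have hsel := fun j => h (P j) (fun x hx => hNI (hPN j hx)) (hPinf j)
    choose k hk1 hk2 using hsel
    have hkinj : Function.Injective k := by
      intro j j' hEq
      obtain ⟨i, hi⟩ := hk1 j
      obtain ⟨i', hi'⟩ := hk1 j'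
      exact (hfinj j i j' i' (by rw [hi, hi', hEq])).1
    refine ⟨Set.range k, ?_, Set.infinite_range_of_injective hkinj, ?_⟩
    · rintro x ⟨j, rfl⟩; exact hPN j (hk1 j)
    · refine ⟨fun m => if hm : ∃ j, k j = m then P hm.choose \ {m} else ∅, ?_⟩
      rintro m ⟨j, rfl⟩
      have hm : ∃ j', k j' = k j := ⟨j, rfl⟩
      have hspec : k hm.choose = k j := hm.choose_spec
      have hj0 : hm.choose = j := hkinj hspec
      simp only [dif_pos hm, hj0]
      refine ⟨fun x hx => ⟨hPN j hx.1, hx.2⟩, ?_, ?_⟩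
      · have := hk2 j
        convert this using 2
      · refine Set.disjoint_left.2 ?_
        rintro x ⟨⟨j', rfl⟩, hx2⟩ ⟨hx3, hx4⟩
        obtain ⟨i, hi⟩ := hk1 j'
        obtain ⟨i', hi'⟩ := hx3
        have : j' = j := (hfinj j' i j i' (by rw [hi, hi'])).1
        subst this
        exact hx2 rfl
  -- iterate the stage
  choose next hsub hinf w hw using stage
  let Ns : ℕ → {N : Set ℕ // N ⊆ I ∧ N.Infinite} := fun r =>
    Nat.rec ⟨I, subset_rfl, hI⟩
      (fun _ t => ⟨next t.1 t.2.1 t.2.2, fun x hx => t.2.1 (hsub t.1 t.2.1 t.2.2 hx),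
        hinf t.1 t.2.1 t.2.2⟩) r
  have hNs : ∀ r, (Ns (r+1)).1 = next (Ns r).1 (Ns r).2.1 (Ns r).2.2 := fun r => rfl
  have hmono : ∀ r r', r ≤ r' → (Ns r').1 ⊆ (Ns r).1 := by
    intro r r' hle
    induction r' with
    | zero => simp_all
    | succ n ih =>
      rcases Nat.lt_or_ge r (n+1) with hlt | hge
      · have h1 : (Ns (n+1)).1 ⊆ (Ns n).1 := by
          rw [hNs n]; exact hsub _ _ _
        exact fun x hx => ih (Nat.lt_succ_iff.1 hlt) (h1 hx)
      · have : r = n + 1 := le_antisymm hle hge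
        subst this; exact subset_rfl
  obtain ⟨K, hK⟩ := exists_nat_gt (M / ε)
  obtain ⟨m, hm⟩ := (Ns (K+1)).2.2.nonempty
  have hmem : ∀ r, r ≤ K + 1 → m ∈ (Ns r).1 := fun r hr => hmono r (K+1) hr hm
  set W : ℕ → Set ℕ := fun r => w (Ns r).1 (Ns r).2.1 (Ns r).2.2 m with hW
  have hWprop : ∀ r, r ≤ K → W r ⊆ (Ns r).1 \ {m} ∧ ε < μ m (W r) ∧
      Disjoint ((Ns (r+1)).1 \ {m}) (W r) := by
    intro r hr
    have := hw (Ns r).1 (Ns r).2.1 (Ns r).2.2 m (by rw [← hNs r] at *; exact hmem (r+1) (Nat.succ_le_succ hr))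
    rw [hNs r]
    exact this
  have hWdisj : ∀ r r', r < r' → r' < K + 1 → Disjoint (W r) (W r') := by
    intro r r' h1 h2
    have hsub2 : W r' ⊆ (Ns (r+1)).1 \ {m} := by
      intro x hx
      have := (hWprop r' (Nat.lt_succ_iff.1 h2)).1 hx
      exact ⟨hmono (r+1) r' h1 this.1, this.2⟩
    exact ((hWprop r (le_of_lt (lt_of_lt_of_le h1 (Nat.lt_succ_iff.1 h2)))).2.2.mono_left hsub2).symm
  have hsum := finsuper m W (K+1) hWdisj
  have hlow : (K+1 : ℝ) * ε ≤ ∑ r ∈ Finset.range (K+1), μ m (W r) := by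
    calc (K+1 : ℝ) * ε = ∑ _r ∈ Finset.range (K+1), ε := by
          rw [Finset.sum_const, Finset.card_range]; push_cast; ring
      _ ≤ ∑ r ∈ Finset.range (K+1), μ m (W r) :=
          Finset.sum_le_sum fun r hr => (hWprop r (Nat.lt_succ_iff.1 (Finset.mem_range.1 hr))).2.1.le
  have hup := bdd m (⋃ r ∈ Finset.range (K+1), W r)
  have hKe : M < (K+1 : ℝ) * ε := by
    rw [div_lt_iff₀ hε] at hK
    nlinarith
  linarith

end Stmt7
namespace Stmt7

/-- Union of the blocks `[m k, m (k+1))` for `k ∈ A`. -/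
def UBlocks (m : ℕ → ℕ) (A : Set ℕ) : Set ℕ := {i | ∃ k ∈ A, m k ≤ i ∧ i < m (k+1)}

lemma UBlocks_mono (m : ℕ → ℕ) {A B : Set ℕ} (h : A ⊆ B) : UBlocks m A ⊆ UBlocks m B := by
  rintro i ⟨k, hk, hi⟩; exact ⟨k, h hk, hi⟩

lemma block_unique {m : ℕ → ℕ} (hm : StrictMono m) {i k k' : ℕ}
    (h1 : m k ≤ i ∧ i < m (k+1)) (h2 : m k' ≤ i ∧ i < m (k'+1)) : k = k' := by
  by_contra hne
  rcases Nat.lt_or_ge k k' with hlt | hge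
  · have : m (k+1) ≤ m k' := hm.monotone (Nat.succ_le_of_lt hlt)
    omega
  · have hlt : k' < k := lt_of_le_of_ne hge (Ne.symm hne)
    have : m (k'+1) ≤ m k := hm.monotone (Nat.succ_le_of_lt hlt)
    omega

lemma UBlocks_disjoint {m : ℕ → ℕ} (hm : StrictMono m) {A B : Set ℕ}
    (h : Disjoint A B) : Disjoint (UBlocks m A) (UBlocks m B) := by
  refine Set.disjoint_left.2 ?_
  rintro i ⟨k, hk, hi⟩ ⟨k', hk', hi'⟩
  have := block_unique hm hi hi'
  subst this
  exact Set.disjoint_left.1 h hk hk'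

/-- The set of values `D x` over admissible `x` supported on the blocks of `A`. -/
def QSet (D : ellInfty →L[ℝ] ℝ) (m : ℕ → ℕ) (C : ℝ) (A : Set ℕ) : Set ℝ :=
  {r | ∃ x : ellInfty, ‖x‖ ≤ C ∧ (∀ i, i ∉ UBlocks m A → (x : ℕ → ℝ) i = 0) ∧ r = D x}

def muD (D : ellInfty →L[ℝ] ℝ) (m : ℕ → ℕ) (C : ℝ) (A : Set ℕ) : ℝ :=
  sSup (QSet D m C A)

variable {D : ellInfty →L[ℝ] ℝ} {m : ℕ → ℕ} {C M : ℝ}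

lemma zero_mem_QSet (hC0 : 0 ≤ C) (A : Set ℕ) : (0:ℝ) ∈ QSet D m C A :=
  ⟨0, by simpa using hC0, fun i _ => by simp [lp.coeFn_zero], by simp⟩

lemma QSet_le (hDM : ‖D‖ ≤ M) (hC0 : 0 ≤ C) (A : Set ℕ) :
    ∀ r ∈ QSet D m C A, r ≤ M * C := by
  rintro r ⟨x, hx1, _, rfl⟩
  calc D x ≤ |D x| := le_abs_self _
    _ ≤ ‖D‖ * ‖x‖ := by
        have := D.le_opNorm x
        rwa [Real.norm_eq_abs] at this
    _ ≤ M * C := by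
        have h0 : 0 ≤ ‖D‖ := norm_nonneg _
        exact mul_le_mul hDM hx1 (norm_nonneg _) (le_trans h0 hDM)

lemma QSet_bddAbove (hDM : ‖D‖ ≤ M) (hC0 : 0 ≤ C) (A : Set ℕ) :
    BddAbove (QSet D m C A) := ⟨M * C, QSet_le hDM hC0 A⟩

lemma muD_nonneg (hDM : ‖D‖ ≤ M) (hC0 : 0 ≤ C) (A : Set ℕ) : 0 ≤ muD D m C A :=
  le_csSup (QSet_bddAbove hDM hC0 A) (zero_mem_QSet hC0 A)

lemma muD_le (hDM : ‖D‖ ≤ M) (hC0 : 0 ≤ C) (A : Set ℕ) : muD D m C A ≤ M * C :=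
  csSup_le ⟨0, zero_mem_QSet hC0 A⟩ (QSet_le hDM hC0 A)

lemma muD_mono (hDM : ‖D‖ ≤ M) (hC0 : 0 ≤ C) : Monotone (muD D m C) := by
  intro A B hAB
  refine csSup_le_csSup (QSet_bddAbove hDM hC0 B) ⟨0, zero_mem_QSet hC0 A⟩ ?_
  rintro r ⟨x, hx1, hx2, rfl⟩
  exact ⟨x, hx1, fun i hi => hx2 i (fun hh => hi (UBlocks_mono m hAB hh)), rfl⟩

lemma abs_le_muD (hDM : ‖D‖ ≤ M) (hC0 : 0 ≤ C) {A : Set ℕ} {x : ellInfty}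
    (hx1 : ‖x‖ ≤ C) (hx2 : ∀ i, i ∉ UBlocks m A → (x : ℕ → ℝ) i = 0) :
    |D x| ≤ muD D m C A := by
  rcases abs_cases (D x) with ⟨h1, _⟩ | ⟨h1, _⟩
  · rw [h1]; exact le_csSup (QSet_bddAbove hDM hC0 A) ⟨x, hx1, hx2, rfl⟩
  · rw [h1]
    refine le_csSup (QSet_bddAbove hDM hC0 A) ⟨-x, by simpa using hx1, fun i hi => ?_, by simp⟩
    simp [lp.coeFn_neg, hx2 i hi]

lemma muD_super (hm : StrictMono m) (hDM : ‖D‖ ≤ M) (hC0 : 0 ≤ C) {A B : Set ℕ}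
    (hAB : Disjoint A B) : muD D m C A + muD D m C B ≤ muD D m C (A ∪ B) := by
  have key : ∀ r ∈ QSet D m C A, ∀ r' ∈ QSet D m C B, r + r' ≤ muD D m C (A ∪ B) := by
    rintro r ⟨x, hx1, hx2, rfl⟩ r' ⟨y, hy1, hy2, rfl⟩
    have hUdisj := UBlocks_disjoint hm hAB
    have hnorm : ‖x + y‖ ≤ C := by
      refine lp.norm_le_of_forall_le hC0 fun i => ?_
      rw [lp.coeFn_add, Pi.add_apply, Real.norm_eq_abs]
      by_cases hiA : i ∈ UBlocks m A
      · have hiB : i ∉ UBlocks m B := Set.disjoint_left.1 hUdisj hiA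
        rw [hy2 i hiB, add_zero]
        have := lp.norm_apply_le_norm ENNReal.top_ne_zero x i
        rw [Real.norm_eq_abs] at this
        exact le_trans this hx1
      · rw [hx2 i hiA, zero_add]
        have := lp.norm_apply_le_norm ENNReal.top_ne_zero y i
        rw [Real.norm_eq_abs] at this
        exact le_trans this hy1
    have hsupp : ∀ i, i ∉ UBlocks m (A ∪ B) → ((x + y : ellInfty) : ℕ → ℝ) i = 0 := by
      intro i hi
      rw [lp.coeFn_add, Pi.add_apply,
        hx2 i (fun hh => hi (UBlocks_mono m Set.subset_union_left hh)),
        hy2 i (fun hh => hi (UBlocks_mono m Set.subset_union_right hh)), add_zero]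
    have hmem : D x + D y ∈ QSet D m C (A ∪ B) := ⟨x + y, hnorm, hsupp, (map_add D x y).symm⟩
    exact le_csSup (QSet_bddAbove hDM hC0 _) hmem
  have h1 : muD D m C A ≤ muD D m C (A ∪ B) - muD D m C B := by
    refine csSup_le ⟨0, zero_mem_QSet hC0 A⟩ fun r hr => ?_
    have h2 : muD D m C B ≤ muD D m C (A ∪ B) - r :=
      csSup_le ⟨0, zero_mem_QSet hC0 B⟩ fun r' hr' => by linarith [key r hr r' hr']
    linarith
  linarith

end Stmt7
namespace Stmt7

theorem boolSeqUncountable (f : (ℕ → Bool) → ℕ) : ¬ Function.Injective f := by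
  intro h
  have e : Set ℕ ≃ (ℕ → Bool) :=
    (Equiv.arrowCongr (Equiv.refl ℕ) Equiv.propEquivBool : (ℕ → Prop) ≃ (ℕ → Bool))
  exact Function.cantor_injective (f ∘ e) (h.comp e.injective)

/-- Prefix encoding defining an almost disjoint family indexed by `ℕ → Bool`. -/
def adFam (x : ℕ → Bool) : Set ℕ :=
  Set.range fun n => Encodable.encode (List.ofFn fun i : Fin n => x i)

lemma adFam_infinite (x : ℕ → Bool) : (adFam x).Infinite := by
  refine Set.infinite_range_of_injective fun n n' h => ?_
  have := Encodable.encode_injective h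
  have := congrArg List.length this
  simpa using this

lemma adFam_almost_disjoint {x y : ℕ → Bool} (hxy : x ≠ y) :
    (adFam x ∩ adFam y).Finite := by
  obtain ⟨i0, hi0⟩ : ∃ i, x i ≠ y i := by
    by_contra hno
    push_neg at hno
    exact hxy (funext hno)
  have hsub : adFam x ∩ adFam y ⊆
      (fun n => Encodable.encode (List.ofFn fun i : Fin n => x i)) '' (Set.Iic i0) := by
    rintro e ⟨⟨n, rfl⟩, ⟨n', hn'⟩⟩
    have hlist : (List.ofFn fun i : Fin n' => y i) = (List.ofFn fun i : Fin n => x i) :=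
      Encodable.encode_injective hn'
    have hlen : n' = n := by
      have := congrArg List.length hlist
      simpa using this
    subst hlen
    refine ⟨n', ?_, rfl⟩
    by_contra hgt
    rw [Set.mem_Iic, not_le] at hgt
    have := congrArg (fun l => l[i0]?) hlist
    simp [List.getElem?_ofFn, hgt] at this
    exact hi0 this.symm
  exact Set.Finite.subset (Set.Finite.image _ (Set.finite_Iic i0)) hsub

/-- In a separable pseudometric space, any family indexed by `ℕ → Bool` has two
distinct indices whose points are `δ`-close. -/
lemma exists_close_pair {Q : Type*} [PseudoMetricSpace Q]
    [TopologicalSpace.SeparableSpace Q] (p : (ℕ → Bool) → Q) (δ : ℝ) (hδ : 0 < δ) :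
    ∃ x y : ℕ → Bool, x ≠ y ∧ dist (p x) (p y) < δ := by
  obtain ⟨T, hTc, hTd⟩ := TopologicalSpace.exists_countable_dense Q
  have hsel : ∀ x : ℕ → Bool, ∃ t : Q, t ∈ T ∧ dist (p x) t < δ/2 := by
    intro x
    have := Metric.dense_iff.1 hTd (p x) (δ/2) (by linarith)
    obtain ⟨t, ht1, ht2⟩ := this
    exact ⟨t, ht2, by simpa [dist_comm] using Metric.mem_ball.1 ht1⟩
  choose t ht1 ht2 using hsel
  haveI : Countable ↥T := hTc.to_subtype
  obtain ⟨enc, henc⟩ := exists_injective_nat ↥T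
  have : ¬ Function.Injective (fun x : ℕ → Bool => enc ⟨t x, ht1 x⟩) :=
    boolSeqUncountable _
  rw [Function.not_injective_iff] at this
  obtain ⟨x, y, hfxy, hxy⟩ := this
  have : t x = t y := congrArg Subtype.val (henc hfxy)
  refine ⟨x, y, hxy, ?_⟩
  calc dist (p x) (p y) ≤ dist (p x) (t x) + dist (t x) (p y) := dist_triangle _ _ _
    _ = dist (p x) (t x) + dist (p y) (t y) := by rw [this, dist_comm (t y) (p y)]
    _ < δ/2 + δ/2 := by exact add_lt_add (ht2 x) (ht2 y)
    _ = δ := by ring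

lemma close_in_quotient (S : Submodule ℝ ellInfty) (y1 y2 : ellInfty) (δ : ℝ)
    (h : dist (Submodule.Quotient.mk y1 : ellInfty ⧸ S) (Submodule.Quotient.mk y2) < δ) :
    ∃ s ∈ S, ‖y1 - y2 - s‖ < δ := by
  have hnorm : ‖(Submodule.Quotient.mk (y1 - y2) : ellInfty ⧸ S)‖ < δ := by
    rw [← dist_zero_right]
    simpa [dist_eq_norm, Submodule.Quotient.mk_sub] using h
  have hpos : 0 < δ - ‖(Submodule.Quotient.mk (y1 - y2) : ellInfty ⧸ S)‖ := by linarith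
  obtain ⟨mm, hmk, hlt⟩ := Submodule.Quotient.norm_mk_lt
    (Submodule.Quotient.mk (y1 - y2) : ellInfty ⧸ S) hpos
  refine ⟨y1 - y2 - mm, ?_, ?_⟩
  · rw [← Submodule.Quotient.eq] at *
    simpa using hmk.symm
  · have : y1 - y2 - (y1 - y2 - mm) = mm := by ring
    rw [this]
    linarith

end Stmt7
namespace Stmt7

lemma indicator_abs_le {z : ℕ → ℝ} {C : ℝ} (hC : ∀ i, |z i| ≤ C) (A : Set ℕ) (i : ℕ) :
    |A.indicator z i| ≤ C := by
  by_cases hi : i ∈ A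
  · rw [Set.indicator_of_mem hi]; exact hC i
  · rw [Set.indicator_of_notMem hi]
    simpa using le_trans (abs_nonneg _) (hC 0)

/-- The vector `z` restricted to the blocks indexed by `A`. -/
def yVec (z : ℕ → ℝ) (C : ℝ) (hC : ∀ i, |z i| ≤ C) (m : ℕ → ℕ) (A : Set ℕ) : ellInfty :=
  ofSeq ((UBlocks m A).indicator z) C (indicator_abs_le hC (UBlocks m A))

lemma yVec_coe (z : ℕ → ℝ) (C : ℝ) (hC : ∀ i, |z i| ≤ C) (m : ℕ → ℕ) (A : Set ℕ) :
    ((yVec z C hC m A : ellInfty) : ℕ → ℝ) = (UBlocks m A).indicator z := rfl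

lemma yVec_norm_le (z : ℕ → ℝ) (C : ℝ) (hC : ∀ i, |z i| ≤ C) (m : ℕ → ℕ) (A : Set ℕ) :
    ‖yVec z C hC m A‖ ≤ C :=
  ofSeq_norm_le _ _ (le_trans (abs_nonneg _) (hC 0)) _

lemma yVec_supp (z : ℕ → ℝ) (C : ℝ) (hC : ∀ i, |z i| ≤ C) (m : ℕ → ℕ) (A : Set ℕ)
    (i : ℕ) (hi : i ∉ UBlocks m A) : ((yVec z C hC m A : ellInfty) : ℕ → ℝ) i = 0 := by
  rw [yVec_coe, Set.indicator_of_notMem hi]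

lemma yVec_split (z : ℕ → ℝ) (C : ℝ) (hC : ∀ i, |z i| ≤ C) {m : ℕ → ℕ}
    (hm : StrictMono m) {A : Set ℕ} {k : ℕ} (hk : k ∈ A) :
    yVec z C hC m A = yVec z C hC m {k} + yVec z C hC m (A \ {k}) := by
  apply lp.ext
  rw [lp.coeFn_add]
  funext i
  rw [Pi.add_apply, yVec_coe, yVec_coe, yVec_coe]
  by_cases h1 : i ∈ UBlocks m {k}
  · have h2 : i ∉ UBlocks m (A \ {k}) := by
      refine Set.disjoint_left.1 (UBlocks_disjoint hm ?_) h1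
      exact Set.disjoint_left.2 fun x hx1 hx2 => hx2.2 hx1
    have hmemA : i ∈ UBlocks m A := UBlocks_mono m (by simpa using hk) h1
    rw [Set.indicator_of_mem hmemA, Set.indicator_of_mem h1, Set.indicator_of_notMem h2,
      add_zero]
  · by_cases h3 : i ∈ UBlocks m (A \ {k})
    · have hmemA : i ∈ UBlocks m A := UBlocks_mono m Set.diff_subset h3
      rw [Set.indicator_of_mem hmemA, Set.indicator_of_notMem h1, Set.indicator_of_mem h3,
        zero_add]
    · have hnA : i ∉ UBlocks m A := by
        intro hiA
        obtain ⟨k', hk', hik'⟩ := hiA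
        by_cases hkk : k' = k
        · exact h1 ⟨k', by simp [hkk], hik'⟩
        · exact h3 ⟨k', ⟨hk', hkk⟩, hik'⟩
      rw [Set.indicator_of_notMem hnA, Set.indicator_of_notMem h1,
        Set.indicator_of_notMem h3, add_zero]

lemma yVec_single (z : ℕ → ℝ) (C : ℝ) (hC : ∀ i, |z i| ≤ C) {m : ℕ → ℕ}
    (hm : StrictMono m) (k : ℕ) :
    yVec z C hC m {k} = ∑ i ∈ Finset.Ico (m k) (m (k+1)), z i • eVec i := by
  apply lp.ext
  funext j
  rw [yVec_coe, coe_sum_smul_eVec]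
  by_cases hj : j ∈ UBlocks m {k}
  · obtain ⟨k', hk', hjk'⟩ := hj
    have : k' = k := by simpa using hk'
    subst this
    rw [Set.indicator_of_mem (show j ∈ UBlocks m {k'} from ⟨k', by simp, hjk'⟩)]
    rw [if_pos (Finset.mem_Ico.2 hjk')]
  · rw [Set.indicator_of_notMem hj, if_neg]
    intro hmem
    exact hj ⟨k, by simp, Finset.mem_Ico.1 hmem⟩

lemma eval_yVec_single (D : ellInfty →L[ℝ] ℝ) (z : ℕ → ℝ) (C : ℝ) (hC : ∀ i, |z i| ≤ C)
    {m : ℕ → ℕ} (hm : StrictMono m) (k : ℕ) :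
    D (yVec z C hC m {k}) = ∑ i ∈ Finset.Ico (m k) (m (k+1)), z i * D (eVec i) := by
  rw [yVec_single z C hC hm k, map_sum]
  refine Finset.sum_congr rfl fun i _ => ?_
  rw [_root_.map_smul, smul_eq_mul]

end Stmt7
namespace Stmt7

lemma key (S : Submodule ℝ ellInfty) (hsep : TopologicalSpace.SeparableSpace (ellInfty ⧸ S))
    (hS : cZero ≤ S)
    (D : ℕ → ellInfty →L[ℝ] ℝ) (M : ℝ) (hM : ∀ k, ‖D k‖ ≤ M)
    (hto0 : ∀ x : ellInfty, x ∈ S → Tendsto (fun k => D k x) atTop (nhds 0))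
    (z : ℕ → ℝ) (C : ℝ) (hC : ∀ i, |z i| ≤ C)
    (ε : ℝ) (hε : 0 < ε) (hbig : ∀ k, ε ≤ |∑' i, z i * D k (eVec i)|) : False := by
  haveI := hsep
  have hC0 : 0 ≤ C := le_trans (abs_nonneg _) (hC 0)
  have hM0 : 0 ≤ M := le_trans (norm_nonneg _) (hM 0)
  set a : ℕ → ℕ → ℝ := fun k i => D k (eVec i) with ha
  have hsum : ∀ k, Summable fun i => |a k i| := fun k =>
    summable_abs_eval S hS ((D k).comp S.subtypeL)
  have hnull : ∀ i, Tendsto (fun k => a k i) atTop (nhds 0) := fun i =>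
    hto0 (eVec i) (hS (eVec_mem_cZero i))
  set δ1 : ℝ := ε / (8 * (C + 1)) with hδ1
  have hδ1pos : 0 < δ1 := by positivity
  obtain ⟨ν, m, hν, hm, hm0, hprop⟩ := hump_extract a hsum hnull δ1 hδ1pos
  have hδ1small : 2 * (C * δ1) ≤ 1/4 * ε := by
    have hte : δ1 * (8 * (C + 1)) = ε := div_mul_cancel₀ _ (by positivity)
    nlinarith [hδ1pos.le, hC0]
  have hblock : ∀ k, 3/4 * ε ≤ |∑ i ∈ Finset.Ico (m k) (m (k+1)), z i * a (ν k) i| := by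
    intro k
    have h := hump_lower (a (ν k)) (hsum (ν k)) z C hC ε δ1 (hbig (ν k))
      (m k) (m (k+1)) (hm.monotone (Nat.le_succ k)) (hprop k).1 (hprop k).2
    linarith
  obtain ⟨J, -, hJinf, hJ⟩ := rosenthal (fun k A => muD (D (ν k)) m C A) (M*C) (ε/16)
      (by positivity)
      (fun k => muD_mono (hM (ν k)) hC0)
      (fun k A => muD_nonneg (hM (ν k)) hC0 A)
      (fun k A B hAB => muD_super hm (hM (ν k)) hC0 hAB)
      (fun k A => muD_le (hM (ν k)) hC0 A)
      Set.univ Set.infinite_univ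
  set eJ := hJinf.natEmbedding with heJ
  set jf : ℕ → ℕ := fun n => (eJ n : ℕ) with hjf
  have hjfinj : Function.Injective jf := fun n n' h => eJ.injective (Subtype.ext h)
  have hjfJ : ∀ n, jf n ∈ J := fun n => (eJ n).2
  set B : (ℕ → Bool) → Set ℕ := fun x => jf '' adFam x with hB
  have hBJ : ∀ x, B x ⊆ J := by rintro x i ⟨n, -, rfl⟩; exact hjfJ n
  have hBinf : ∀ x, (B x).Infinite := fun x => (adFam_infinite x).image hjfinj.injOn
  have hBdisj : ∀ x y, x ≠ y → (B x ∩ B y).Finite := by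
    intro x y hxy
    rw [hB]
    simp only
    rw [← Set.image_inter hjfinj]
    exact (adFam_almost_disjoint hxy).image _
  set δ2 : ℝ := ε / (16 * (M + 1)) with hδ2
  have hδ2pos : 0 < δ2 := by positivity
  obtain ⟨x, y, hxy, hclose⟩ := exists_close_pair
    (fun x => (Submodule.Quotient.mk (yVec z C hC m (B x)) : ellInfty ⧸ S)) δ2 hδ2pos
  obtain ⟨s, hsS, hsnorm⟩ := close_in_quotient S _ _ δ2 hclose
  have hdiffinf : (B x \ B y).Infinite := by
    have h1 : (B x \ (B x ∩ B y)).Infinite := (hBinf x).diff (hBdisj x y hxy)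
    rwa [Set.diff_self_inter] at h1
  have hlow : ∀ k ∈ B x \ B y, ε/2 < |D (ν k) s| := by
    intro k hk
    have hkJ : k ∈ J := hBJ x hk.1
    have hkBx : k ∈ B x := hk.1
    have hkBy : k ∉ B y := hk.2
    have hMk : ‖D (ν k)‖ ≤ M := hM (ν k)
    have hsplit := yVec_split z C hC hm hkBx
    have h1 : |D (ν k) (yVec z C hC m (B x \ {k}))| ≤ ε/16 := by
      have hsub : B x \ {k} ⊆ J \ {k} := fun u hu => ⟨hBJ x hu.1, hu.2⟩
      have habs := abs_le_muD (m := m) hMk hC0 (A := J \ {k})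
        (yVec_norm_le z C hC m (B x \ {k}))
        (fun i hi => yVec_supp z C hC m _ i (fun hmem => hi (UBlocks_mono m hsub hmem)))
      exact le_trans habs (hJ k hkJ)
    have h2 : |D (ν k) (yVec z C hC m (B y))| ≤ ε/16 := by
      have hsub : B y ⊆ J \ {k} := fun u hu =>
        ⟨hBJ y hu, fun hh => hkBy ((Set.mem_singleton_iff.1 hh) ▸ hu)⟩
      have habs := abs_le_muD (m := m) hMk hC0 (A := J \ {k})
        (yVec_norm_le z C hC m (B y))
        (fun i hi => yVec_supp z C hC m _ i (fun hmem => hi (UBlocks_mono m hsub hmem)))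
      exact le_trans habs (hJ k hkJ)
    have h3 : 3/4*ε ≤ |D (ν k) (yVec z C hC m {k})| := by
      rw [eval_yVec_single (D (ν k)) z C hC hm k]
      exact hblock k
    set r : ellInfty := yVec z C hC m (B x) - yVec z C hC m (B y) - s with hr
    have h4 : |D (ν k) r| ≤ ε/16 := by
      have hop := (D (ν k)).le_opNorm r
      rw [Real.norm_eq_abs] at hop
      have h5 : ‖D (ν k)‖ * ‖r‖ ≤ M * δ2 := mul_le_mul hMk hsnorm.le (norm_nonneg _) hM0
      have h6 : M * δ2 ≤ ε/16 := by
        have hte : δ2 * (16 * (M + 1)) = ε := div_mul_cancel₀ _ (by positivity)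
        nlinarith [hδ2pos.le, hM0]
      linarith
    have hDs : D (ν k) s = D (ν k) (yVec z C hC m {k}) + D (ν k) (yVec z C hC m (B x \ {k}))
        - D (ν k) (yVec z C hC m (B y)) - D (ν k) r := by
      have hs' : s = (yVec z C hC m {k} + yVec z C hC m (B x \ {k}))
          - yVec z C hC m (B y) - r := by
        rw [← hsplit, hr]; abel
      rw [hs', map_sub, map_sub, map_add]
    have habs4 : ∀ u v : ℝ, |u - v| ≤ |u| + |v| := fun u v => by
      rw [sub_eq_add_neg]
      simpa [abs_neg] using abs_add_le u (-v)
    have hE : D (ν k) (yVec z C hC m {k})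
        = D (ν k) s - D (ν k) (yVec z C hC m (B x \ {k}))
          + D (ν k) (yVec z C hC m (B y)) + D (ν k) r := by
      rw [hDs]; ring
    have hchain : |D (ν k) (yVec z C hC m {k})|
        ≤ |D (ν k) s| + |D (ν k) (yVec z C hC m (B x \ {k}))|
          + |D (ν k) (yVec z C hC m (B y))| + |D (ν k) r| := by
      rw [hE]
      calc |D (ν k) s - D (ν k) (yVec z C hC m (B x \ {k}))
            + D (ν k) (yVec z C hC m (B y)) + D (ν k) r|
          ≤ |D (ν k) s - D (ν k) (yVec z C hC m (B x \ {k}))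
            + D (ν k) (yVec z C hC m (B y))| + |D (ν k) r| := abs_add_le _ _
        _ ≤ |D (ν k) s - D (ν k) (yVec z C hC m (B x \ {k}))|
            + |D (ν k) (yVec z C hC m (B y))| + |D (ν k) r| := by
            have := abs_add_le (D (ν k) s - D (ν k) (yVec z C hC m (B x \ {k})))
              (D (ν k) (yVec z C hC m (B y)))
            linarith
        _ ≤ |D (ν k) s| + |D (ν k) (yVec z C hC m (B x \ {k}))|
            + |D (ν k) (yVec z C hC m (B y))| + |D (ν k) r| := by
            have := habs4 (D (ν k) s) (D (ν k) (yVec z C hC m (B x \ {k})))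
            linarith
    linarith
  have htend := hto0 s hsS
  obtain ⟨N, hN⟩ := Metric.tendsto_atTop.1 htend (ε/2) (by linarith)
  have himg : (ν '' (B x \ B y)).Infinite := hdiffinf.image hν.injective.injOn
  obtain ⟨j, hjmem, hjgt⟩ := himg.exists_gt N
  obtain ⟨k, hkmem, rfl⟩ := hjmem
  have hfin := hN (ν k) (le_of_lt hjgt)
  rw [Real.dist_eq, sub_zero] at hfin
  exact absurd hfin (not_lt.2 (hlow k hkmem).le)

end Stmt7
/-- a closed subspace `S` of `ℓ∞` containing `c₀` with `ℓ∞/S` separable is an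
`ℓ∞`-Grothendieck subspace. -/
theorem linfGrothendieck_of_separable_quotient
    (S : Submodule ℝ ellInfty) (hcl : IsClosed (S : Set ellInfty))
    (hS : cZero ≤ S)
    (hsep : TopologicalSpace.SeparableSpace (ellInfty ⧸ S)) :
    IsLinfGrothendieck S := by
  refine ⟨hS, ?_⟩
  intro f g hconv
  intro z hz
  obtain ⟨C, hC⟩ := hz
  haveI : Fact ((1:ℝ≥0∞) ≤ ∞) := ⟨le_top⟩
  haveI : CompleteSpace ↥S := hcl.completeSpace_coe
  set d : ℕ → (↥S →L[ℝ] ℝ) := fun n => f n - g with hd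
  have hconv0 : ∀ x : ↥S, Tendsto (fun n => d n x) atTop (nhds 0) := by
    intro x
    have := (hconv x).sub (tendsto_const_nhds (x := g x))
    simpa [hd, sub_self] using this
  have hptbdd : ∀ x : ↥S, ∃ C', ∀ n, ‖d n x‖ ≤ C' := by
    intro x
    obtain ⟨C', hC'⟩ := (hconv0 x).norm.bddAbove_range
    exact ⟨C', fun n => hC' ⟨n, rfl⟩⟩
  obtain ⟨M, hM⟩ := banach_steinhaus hptbdd
  -- summability facts
  have hsumd : ∀ n, Summable fun i => z i * d n (eIn S hS i) :=
    fun n => Stmt7.summable_mul_eval S hS (d n) z C hC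
  have hsumg : Summable fun i => z i * g (eIn S hS i) :=
    Stmt7.summable_mul_eval S hS g z C hC
  -- reduce to the difference tending to 0
  have hsplit : ∀ n, (∑' i, z i * f n (eIn S hS i))
      = (∑' i, z i * d n (eIn S hS i)) + ∑' i, z i * g (eIn S hS i) := by
    intro n
    rw [← Summable.tsum_add (hsumd n) hsumg]
    refine tsum_congr fun i => ?_
    rw [hd]
    simp only [ContinuousLinearMap.sub_apply]
    ring
  have hmain : Tendsto (fun n => ∑' i, z i * d n (eIn S hS i)) atTop (nhds 0) := by
    by_contra hT
    rw [Metric.tendsto_atTop] at hT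
    push_neg at hT
    obtain ⟨ε, hε, hfreq⟩ := hT
    have hfreq' : ∃ᶠ n in atTop, ε ≤ |∑' i, z i * d n (eIn S hS i)| := by
      rw [Filter.frequently_atTop]
      intro N
      obtain ⟨n, hn1, hn2⟩ := hfreq N
      rw [Real.dist_eq, sub_zero] at hn2
      exact ⟨n, hn1, hn2⟩
    obtain ⟨φ, hφ, hφbig⟩ := extraction_of_frequently_atTop hfreq'
    -- Hahn-Banach extensions
    have hHB := fun n => exists_extension_norm_eq S (d n)
    choose Dext hD1 hD2 using hHB
    refine Stmt7.key S hsep hS (fun k => Dext (φ k)) M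
      (fun k => by rw [hD2]; exact hM (φ k)) ?_ z C hC ε hε ?_
    · intro x hx
      have h1 : ∀ k, Dext (φ k) x = d (φ k) ⟨x, hx⟩ := fun k => hD1 (φ k) ⟨x, hx⟩
      have h2 : Tendsto (fun k => d (φ k) ⟨x, hx⟩) atTop (nhds 0) :=
        (hconv0 ⟨x, hx⟩).comp hφ.tendsto_atTop
      refine h2.congr fun k => (h1 k).symm
    · intro k
      have heq : ∀ i, Dext (φ k) (eVec i) = d (φ k) (eIn S hS i) := fun i =>
        hD1 (φ k) (eIn S hS i)
      calc ε ≤ |∑' i, z i * d (φ k) (eIn S hS i)| := hφbig k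
        _ = |∑' i, z i * Dext (φ k) (eVec i)| := by
            congr 1
            exact tsum_congr fun i => by rw [heq i]
  have := hmain.add (tendsto_const_nhds (x := ∑' i, z i * g (eIn S hS i)))
  rw [zero_add] at this
  refine this.congr fun n => (hsplit n).symm
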